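/- φ̃ tends to infinity: for every n ∈ ℕ there exists N ∈ ℕ such that φ̃(m) > n for all m > N. -/

import Mathlib

/-- φ̃(n): number of m with 1 ≤ m ≤ n, gcd(m,n)=1, m not prime. -/
def phiT (n : ℕ) : ℕ :=
  ((Finset.Icc 1 n).filter (fun m => Nat.gcd m n = 1 ∧ ¬ m.Prime)).card

/-- The product of the first k primes. -/
noncomputable def primorialN (k : ℕ) : ℕ := ∏ i ∈ Finset.range k, Nat.nth Nat.Prime i

theorem stmt8 (n : ℕ) : ∃ N : ℕ, ∀ m > N, phiT m > n := by
  classical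
  set J := 2 * (n + 2) with hJ
  set C := 4 ^ (2 * J) with hCdef
  refine ⟨C ^ (n + 2), fun m hm => ?_⟩
  have hC4 : 4 ≤ C := by
    have : (4:ℕ)^1 ≤ 4^(2*J) := Nat.pow_le_pow_right (by norm_num) (by omega)
    simpa using this
  have hm1 : 1 ≤ m := by
    have : 1 ≤ C ^ (n+2) := Nat.one_le_pow _ _ (by omega)
    omega
  -- least prime not dividing m
  have hex : ∃ p, Nat.Prime p ∧ ¬ p ∣ m := by
    obtain ⟨q, hq1, hq2⟩ := Nat.exists_infinite_primes (m+1)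
    exact ⟨q, hq2, fun h => by have := Nat.le_of_dvd hm1 h; omega⟩
  set p := Nat.find hex with hpdef
  obtain ⟨hp, hpd⟩ : Nat.Prime p ∧ ¬ p ∣ m := Nat.find_spec hex
  have hmin : ∀ r < p, Nat.Prime r → r ∣ m := by
    intro r hr hpr
    by_contra h
    exact Nat.find_min hex hr ⟨hpr, h⟩
  -- key: p ^ (n+2) ≤ m
  have hkey : p ^ (n + 2) ≤ m := by
    rcases le_or_gt p C with hpc | hpc
    · calc p ^ (n+2) ≤ C ^ (n+2) := Nat.pow_le_pow_left hpc _
        _ ≤ m := hm.le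
    · have hC : C ≤ p := hpc.le
      have h4pos : ∀ j : ℕ, 0 < (4:ℕ) ^ j := fun j => Nat.pow_pos (by norm_num)
      have hdivpos : ∀ j ≤ J, 0 < p / 4 ^ j := by
        intro j hj
        apply Nat.div_pos _ (h4pos j)
        calc (4:ℕ)^j ≤ 4^(2*J) := Nat.pow_le_pow_right (by norm_num) (by omega)
          _ ≤ p := hC
      have hb : ∀ j ∈ Finset.Icc 1 J, ∃ r, Nat.Prime r ∧ p / 4^j < r ∧ r ≤ 2 * (p / 4^j) := by
        intro j hj
        simp only [Finset.mem_Icc] at hj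
        exact Nat.exists_prime_lt_and_le_two_mul _ (by have := hdivpos j hj.2; omega)
      choose! f hf1 hf2 hf3 using hb
      -- f is strictly decreasing on Icc 1 J
      have hanti : ∀ i ∈ Finset.Icc 1 J, ∀ j ∈ Finset.Icc 1 J, i < j → f j < f i := by
        intro i hi j hj hij
        have hii := Finset.mem_Icc.mp hi
        have hjj := Finset.mem_Icc.mp hj
        have key : p / 4 ^ j ≤ (p / 4 ^ i) / 4 := by
          have : p / 4 ^ j = (p / 4 ^ i) / 4 ^ (j - i) := by
            rw [Nat.div_div_eq_div_mul, ← pow_add]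
            have hji : i + (j - i) = j := by omega
            rw [hji]
          rw [this]
          have h41 : (4:ℕ) ≤ 4 ^ (j - i) := by
            have : (4:ℕ)^1 ≤ 4^(j-i) := Nat.pow_le_pow_right (by norm_num) (by omega)
            simpa using this
          exact Nat.div_le_div_left h41 (by norm_num)
        have h2 : 2 * (p / 4 ^ j) ≤ p / 4 ^ i := by
          have h44 : 4 * ((p / 4 ^ i) / 4) ≤ p / 4 ^ i := Nat.mul_div_le _ 4 |>.trans_eq rfl
          omega
        calc f j ≤ 2 * (p / 4 ^ j) := hf3 j hj
          _ ≤ p / 4 ^ i := h2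
          _ < f i := hf2 i hi
      have hinj : Set.InjOn f (Finset.Icc 1 J) := by
        intro a ha b hb hab
        by_contra hne
        rcases Nat.lt_or_ge a b with h | h
        · exact absurd hab (hanti a ha b hb h).ne'
        · have : b < a := by omega
          exact absurd hab.symm (hanti b hb a ha this).ne'
      have hflt : ∀ j ∈ Finset.Icc 1 J, f j < p := by
        intro j hj
        have hjj := Finset.mem_Icc.mp hj
        have h41 : (4:ℕ) ≤ 4 ^ j := by
          have : (4:ℕ)^1 ≤ 4^j := Nat.pow_le_pow_right (by norm_num) hjj.1
          simpa using this
        have h1 : p / 4 ^ j ≤ p / 4 := Nat.div_le_div_left h41 (by norm_num)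
        have h2 : 4 * (p / 4) ≤ p := Nat.mul_div_le p 4 |>.trans_eq rfl
        have h3 : 1 ≤ p / 4 := by
          apply Nat.div_pos _ (by norm_num)
          omega
        calc f j ≤ 2 * (p / 4 ^ j) := hf3 j hj
          _ ≤ 2 * (p / 4) := by omega
          _ < p := by omega
      -- product of the f j divides m
      have hdvd : (∏ j ∈ Finset.Icc 1 J, f j) ∣ m := by
        have him : ∏ r ∈ (Finset.Icc 1 J).image f, r = ∏ j ∈ Finset.Icc 1 J, f j :=
          Finset.prod_image (fun a ha b hb h => hinj ha hb h)
        rw [← him]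
        apply Finset.prod_primes_dvd
        · intro r hr
          obtain ⟨j, hj, rfl⟩ := Finset.mem_image.mp hr
          exact (hf1 j hj).prime
        · intro r hr
          obtain ⟨j, hj, rfl⟩ := Finset.mem_image.mp hr
          exact hmin _ (hflt j hj) (hf1 j hj)
      -- lower bound for the product
      have hstep : ∀ j ∈ Finset.Icc 1 J, p ≤ f j * 4 ^ j := by
        intro j hj
        have := hf2 j hj
        have := (Nat.div_lt_iff_lt_mul (h4pos j)).mp this
        omega
      have h1 : p ^ J ≤ ∏ j ∈ Finset.Icc 1 J, (f j * 4 ^ j) := by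
        calc p ^ J = ∏ _j ∈ Finset.Icc 1 J, p := by
              rw [Finset.prod_const, Nat.card_Icc]
              norm_num
          _ ≤ _ := Finset.prod_le_prod' hstep
      have h2 : ∏ j ∈ Finset.Icc 1 J, (f j * 4 ^ j)
          = (∏ j ∈ Finset.Icc 1 J, f j) * ∏ j ∈ Finset.Icc 1 J, (4:ℕ) ^ j :=
        Finset.prod_mul_distrib
      have h3 : ∏ j ∈ Finset.Icc 1 J, (4:ℕ) ^ j ≤ 4 ^ (J * J) := by
        calc ∏ j ∈ Finset.Icc 1 J, (4:ℕ) ^ j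
            ≤ ∏ _j ∈ Finset.Icc 1 J, (4:ℕ) ^ J := by
              apply Finset.prod_le_prod'
              intro j hj
              exact Nat.pow_le_pow_right (by norm_num) (Finset.mem_Icc.mp hj).2
          _ = 4 ^ (J * J) := by
              rw [Finset.prod_const, Nat.card_Icc, ← pow_mul]
              norm_num
      have h4' : (4:ℕ) ^ (J * J) ≤ p ^ (n + 2) := by
        have : (4:ℕ) ^ (J * J) = C ^ (n + 2) := by
          rw [hCdef, ← pow_mul]
          congr 1
          rw [hJ]; ring
        rw [this]
        exact Nat.pow_le_pow_left hC _
      have h5 : p ^ (n+2) * 4 ^ (J * J) ≤ (∏ j ∈ Finset.Icc 1 J, f j) * 4 ^ (J * J) := by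
        calc p ^ (n+2) * 4 ^ (J*J) ≤ p ^ (n+2) * p ^ (n+2) :=
              Nat.mul_le_mul_left _ h4'
          _ = p ^ J := by rw [← pow_add]; congr 1; omega
          _ ≤ ∏ j ∈ Finset.Icc 1 J, (f j * 4 ^ j) := h1
          _ = _ := h2
          _ ≤ _ := Nat.mul_le_mul_left _ h3
      have h6 : p ^ (n+2) ≤ ∏ j ∈ Finset.Icc 1 J, f j :=
        Nat.le_of_mul_le_mul_right h5 (h4pos (J*J))
      exact h6.trans (Nat.le_of_dvd (by omega) hdvd)
  -- now count the powers p^2, ..., p^(n+2)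
  have hp2 : 2 ≤ p := hp.two_le
  have hsub : (Finset.range (n+1)).image (fun i => p ^ (i+2))
      ⊆ (Finset.Icc 1 m).filter (fun x => Nat.gcd x m = 1 ∧ ¬ x.Prime) := by
    intro x hx
    obtain ⟨i, hi, rfl⟩ := Finset.mem_image.mp hx
    have hi' : i < n + 1 := Finset.mem_range.mp hi
    rw [Finset.mem_filter, Finset.mem_Icc]
    refine ⟨⟨Nat.one_le_pow _ _ (by omega), ?_⟩, ?_, ?_⟩
    · calc p ^ (i+2) ≤ p ^ (n+2) := Nat.pow_le_pow_right (by omega) (by omega)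
        _ ≤ m := hkey
    · exact Nat.Coprime.pow_left _ ((Nat.Prime.coprime_iff_not_dvd hp).mpr hpd)
    · intro hprime
      have hdvd' : p ∣ p ^ (i+2) := dvd_pow_self p (by omega)
      rcases (Nat.Prime.eq_one_or_self_of_dvd hprime p hdvd') with h | h
      · omega
      · have : p ^ 1 = p ^ (i + 2) := by rw [pow_one]; exact h
        have := Nat.pow_right_injective hp2 this
        omega
  have hcard : ((Finset.range (n+1)).image (fun i => p ^ (i+2))).card = n + 1 := by
    rw [Finset.card_image_of_injective _ ?_, Finset.card_range]
    intro a b hab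
    have := Nat.pow_right_injective hp2 hab
    omega
  have := Finset.card_le_card hsub
  rw [hcard] at this
  unfold phiT
  omega
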